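/- arXiv:1705.02929 — 4 statements merged into one kernel-verified Lean document; each statement's English description precedes it below -/
import Mathlib

section
/- If G ≤ Sym(Ω) is a p-group for a prime p, then its 2-closure G^(2) is also a p-group. -/
open scoped Classical Pointwise

noncomputable section

variable {H : Type*}

/-- The simple quantity of a subset `T` of `H` in the group algebra `ℚ H`. -/
def simpleQ [Group H] [Fintype H] (T : Set H) : MonoidAlgebra ℚ H :=
  ∑ h ∈ T.toFinset, MonoidAlgebra.single h (1 : ℚ)

/-- An S-ring over a finite group `H`: a partition of `H` containing `{1}`,
closed under inversion, whose simple quantities span a subalgebra of `ℚ H`. -/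
structure SRing (H : Type*) [Group H] [Fintype H] where
  basicSets : Set (Set H)
  exists_unique_mem : ∀ h : H, ∃! T, T ∈ basicSets ∧ h ∈ T
  nonempty_of_mem : ∀ T ∈ basicSets, T.Nonempty
  one_mem : ({1} : Set H) ∈ basicSets
  inv_mem : ∀ T ∈ basicSets, T⁻¹ ∈ basicSets
  mul_mem : ∀ T ∈ basicSets, ∀ S ∈ basicSets,
    simpleQ T * simpleQ S ∈ Submodule.span ℚ (simpleQ '' basicSets)

namespace SRing

variable [Group H] [Fintype H]

/-- The underlying ℚ-subspace of the S-ring. -/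
def carrier (A : SRing H) : Submodule ℚ (MonoidAlgebra ℚ H) :=
  Submodule.span ℚ (simpleQ '' A.basicSets)

/-- `S` is an `𝒜`-subset: its simple quantity lies in `𝒜`. -/
def IsSubset (A : SRing H) (S : Set H) : Prop := simpleQ S ∈ A.carrier

/-- The thin radical of the S-ring. -/
def thin (A : SRing H) : Set H := {g | ({g} : Set H) ∈ A.basicSets}

end SRing

/-- The radical of a subset `S`: elements `h` with `hS = Sh = S`. -/
def radSet [Group H] (S : Set H) : Set H := {h | {h} * S = S ∧ S * {h} = S}

/-- The automorphism group of the Cayley digraph `Cay(H, T)`. -/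
def cayAut [Group H] (T : Set H) : Subgroup (Equiv.Perm H) where
  carrier := {g | ∀ x y : H, y * x⁻¹ ∈ T ↔ g y * (g x)⁻¹ ∈ T}
  one_mem' := by intro x y; simp
  mul_mem' := by
    intro a b ha hb x y
    simpa [Equiv.Perm.mul_apply] using (hb x y).trans (ha (b x) (b y))
  inv_mem' := by
    intro a ha x y
    simpa using (ha (a⁻¹ x) (a⁻¹ y)).symm

/-- The automorphism group of an S-ring. -/
def SRing.aut [Group H] [Fintype H] (A : SRing H) : Subgroup (Equiv.Perm H) :=
  ⨅ T ∈ A.basicSets, cayAut T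

/-- The right regular representation of `H` inside `Sym(H)`. -/
def rightRegular (H : Type*) [Group H] : Subgroup (Equiv.Perm H) where
  carrier := Set.range fun h : H => Equiv.mulRight h
  one_mem' := ⟨1, by ext x; simp⟩
  mul_mem' := by
    rintro _ _ ⟨a, rfl⟩ ⟨b, rfl⟩
    exact ⟨b * a, by ext x; simp [mul_assoc]⟩
  inv_mem' := by
    rintro _ ⟨a, rfl⟩
    exact ⟨a⁻¹, by ext x; simp⟩

/-- The orbit of `h` under the stabilizer of the identity in `G ≤ Sym(H)`. -/
def orbitOfStab [Group H] (G : Subgroup (Equiv.Perm H)) (h : H) : Set H :=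
  {x | ∃ g ∈ G, g 1 = 1 ∧ g h = x}

/-- A Schurian S-ring: its basic sets are the orbits of the identity-stabilizer
of some overgroup of the right regular representation. -/
def SRing.IsSchurian [Group H] [Fintype H] (A : SRing H) : Prop :=
  ∃ G : Subgroup (Equiv.Perm H), rightRegular H ≤ G ∧
    A.basicSets = {S | ∃ h : H, S = orbitOfStab G h}

/-- A p-S-ring: all basic sets have `p`-power size. -/
def SRing.IsPSRing [Group H] [Fintype H] (A : SRing H) (p : ℕ) : Prop :=
  ∀ T ∈ A.basicSets, ∃ k : ℕ, Nat.card T = p ^ k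

/-- A decomposable S-ring: a nontrivial `E/F`-wreath product. -/
def SRing.Decomposable [Group H] [Fintype H] (A : SRing H) : Prop :=
  ∃ E F : Subgroup H, F.Normal ∧ F ≤ E ∧ E ≠ ⊤ ∧ F ≠ ⊥ ∧
    A.IsSubset ↑E ∧ A.IsSubset ↑F ∧
    ∀ T ∈ A.basicSets, T ⊆ ((E : Set H))ᶜ → (F : Set H) ⊆ radSet T

/-- The 2-closure of a permutation group `G ≤ Sym(Ω)`: all permutations
preserving every `G`-orbit on `Ω × Ω`. -/
def twoClosure {Ω : Type*} (G : Subgroup (Equiv.Perm Ω)) : Subgroup (Equiv.Perm Ω) where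
  carrier := {γ | ∀ a b : Ω, ∃ g ∈ G, g a = γ a ∧ g b = γ b}
  one_mem' := fun a b => ⟨1, G.one_mem, rfl, rfl⟩
  mul_mem' := by
    intro γ δ hγ hδ a b
    obtain ⟨g, hg, hga, hgb⟩ := hδ a b
    obtain ⟨g', hg', hg'a, hg'b⟩ := hγ (δ a) (δ b)
    exact ⟨g' * g, G.mul_mem hg' hg, by simp [Equiv.Perm.mul_apply, hga, hg'a],
      by simp [Equiv.Perm.mul_apply, hgb, hg'b]⟩
  inv_mem' := by
    intro γ hγ a b
    obtain ⟨g, hg, hga, hgb⟩ := hγ (γ⁻¹ a) (γ⁻¹ b)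
    have h1 : g (γ⁻¹ a) = a := by rw [hga]; exact γ.apply_symm_apply a
    have h2 : g (γ⁻¹ b) = b := by rw [hgb]; exact γ.apply_symm_apply b
    refine ⟨g⁻¹, G.inv_mem hg, ?_, ?_⟩
    · exact g.injective (by rw [h1]; exact g.apply_symm_apply a)
    · exact g.injective (by rw [h2]; exact g.apply_symm_apply b)


namespace WielandtAux

variable {Ω : Type*}

lemma pow_apply_pow (z : Equiv.Perm Ω) (i j : ℕ) (x : Ω) :
    (z ^ i) ((z ^ j) x) = (z ^ (i + j)) x := by
  rw [← Equiv.Perm.mul_apply, ← pow_add]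

/-- `y` lies in the `⟨z⟩`-orbit of `x`. -/
def zRel (z : Equiv.Perm Ω) (x y : Ω) : Prop := ∃ i : ℕ, (z ^ i) x = y

lemma zRel_equivalence (z : Equiv.Perm Ω) {p : ℕ} (hp : 0 < p) (hz : z ^ p = 1) :
    Equivalence (zRel z) := by
  constructor
  · exact fun x => ⟨0, rfl⟩
  · rintro x y ⟨i, rfl⟩
    refine ⟨i * (p - 1), ?_⟩
    rw [pow_apply_pow]
    have h1 : i * (p - 1) + i = i * p := by
      cases p with
      | zero => omega
      | succ p' => simp [Nat.mul_succ]
    rw [h1, mul_comm, pow_mul, hz, one_pow]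
    rfl
  · rintro x y w ⟨i, rfl⟩ ⟨j, rfl⟩
    exact ⟨j + i, (pow_apply_pow z j i x).symm⟩

/-- The setoid of `⟨z⟩`-orbits. -/
def zSetoid (z : Equiv.Perm Ω) {p : ℕ} (hp : 0 < p) (hz : z ^ p = 1) : Setoid Ω :=
  ⟨zRel z, zRel_equivalence z hp hz⟩

variable {z : Equiv.Perm Ω} {p : ℕ}

/-- The induced permutation group on the quotient. -/
def quotGroup (z : Equiv.Perm Ω) (hp : 0 < p) (hz : z ^ p = 1)
    (G : Subgroup (Equiv.Perm Ω)) :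
    Subgroup (Equiv.Perm (Quotient (zSetoid z hp hz))) where
  carrier := {g' | ∃ g ∈ G, ∀ x : Ω,
    g' (Quotient.mk (zSetoid z hp hz) x) = Quotient.mk (zSetoid z hp hz) (g x)}
  one_mem' := ⟨1, G.one_mem, fun x => rfl⟩
  mul_mem' := by
    rintro a b ⟨ga, hga, ha⟩ ⟨gb, hgb, hb⟩
    refine ⟨ga * gb, G.mul_mem hga hgb, fun x => ?_⟩
    simp only [Equiv.Perm.mul_apply, hb, ha]
  inv_mem' := by
    rintro a ⟨g, hg, h⟩
    refine ⟨g⁻¹, G.inv_mem hg, fun x => ?_⟩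
    have h2 := h (g⁻¹ x)
    rw [show g (g⁻¹ x) = x from g.apply_symm_apply x] at h2
    rw [← h2]; exact a.symm_apply_apply _

lemma quot_pow {s : Setoid Ω} (g' : Equiv.Perm (Quotient s)) (g : Equiv.Perm Ω)
    (h : ∀ x : Ω, g' (Quotient.mk s x) = Quotient.mk s (g x)) (m : ℕ) (x : Ω) :
    (g' ^ m) (Quotient.mk s x) = Quotient.mk s ((g ^ m) x) := by
  induction m generalizing x with
  | zero => rfl
  | succ m ih =>
      rw [pow_succ, pow_succ, Equiv.Perm.mul_apply, Equiv.Perm.mul_apply, h, ih]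

universe u

lemma key {p q : ℕ} (hp : p.Prime) (hq : q.Prime) (hne : q ≠ p) :
    ∀ (n : ℕ) (Ω : Type u) (inst : Fintype Ω), Fintype.card Ω ≤ n →
      ∀ (G : Subgroup (Equiv.Perm Ω)), IsPGroup p G →
      ∀ σ ∈ twoClosure G, σ ^ q = 1 → σ = 1 := by
  intro n
  induction n with
  | zero =>
      intro Ω inst hn G hG σ hσ hσq
      have he : IsEmpty Ω := Fintype.card_eq_zero_iff.mp (le_antisymm hn (Nat.zero_le _))
      ext x
      exact (he.false x).elim
  | succ n ih =>
      intro Ω inst hn G hG σ hσ hσq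
      by_cases htriv : ∀ g ∈ G, g = (1 : Equiv.Perm Ω)
      · ext x
        obtain ⟨g, hg, hgx, -⟩ := hσ x x
        rw [htriv g hg] at hgx
        simpa using hgx.symm
      · push_neg at htriv
        obtain ⟨g₀, hg₀G, hg₀⟩ := htriv
        haveI : Nontrivial G := ⟨⟨⟨g₀, hg₀G⟩, 1, by simpa [Subtype.ext_iff] using hg₀⟩⟩
        haveI : Fact p.Prime := ⟨hp⟩
        haveI : Finite ↥G := inferInstance
        obtain ⟨u, hu⟩ := @exists_ne _ (hG.center_nontrivial) 1
        set c : G := (u : G) with hc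
        have hcne : c ≠ 1 := by
          intro h
          exact hu (Subtype.ext (by rw [OneMemClass.coe_one, ← hc]; exact h))
        have hccomm : ∀ g : G, c * g = g * c := fun g =>
          (Subgroup.mem_center_iff.mp u.2 g).symm
        obtain ⟨k, hk⟩ := hG c
        have hdvd : orderOf c ∣ p ^ k := orderOf_dvd_of_pow_eq_one hk
        obtain ⟨m, hmk, hm⟩ := (Nat.dvd_prime_pow hp).mp hdvd
        have hm1 : m ≠ 0 := by
          rintro rfl
          rw [pow_zero] at hm
          exact hcne (orderOf_eq_one_iff.mp hm)
        set z₀ : G := c ^ (p ^ (m - 1)) with hz₀def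
        have hpm : p ^ (m - 1) * p = p ^ m := by
          rw [← pow_succ]
          congr 1
          omega
        have hz₀p : z₀ ^ p = 1 := by
          rw [hz₀def, ← pow_mul, hpm, ← hm]
          exact pow_orderOf_eq_one c
        have hz₀ne : z₀ ≠ 1 := by
          intro h
          have h2 : orderOf c ∣ p ^ (m - 1) := orderOf_dvd_of_pow_eq_one h
          rw [hm] at h2
          have h3 : p ^ m ≤ p ^ (m - 1) := Nat.le_of_dvd (pow_pos hp.pos _) h2
          have h4 : p ^ (m - 1) < p ^ m := Nat.pow_lt_pow_right hp.one_lt (by omega)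
          omega
        have hz₀comm : ∀ g : G, z₀ * g = g * z₀ := fun g => by
          rw [hz₀def]
          exact Commute.pow_left (hccomm g) _
        set z : Equiv.Perm Ω := (z₀ : Equiv.Perm Ω) with hzdef
        have hzG : z ∈ G := z₀.2
        have hzp : z ^ p = 1 := by
          rw [hzdef, ← Subgroup.coe_pow, hz₀p, Subgroup.coe_one]
        have hzne : z ≠ 1 := by
          intro h
          apply hz₀ne
          apply Subtype.ext
          rw [OneMemClass.coe_one]
          exact h
        have hcomm : ∀ g ∈ G, z * g = g * z := fun g hg => by
          simpa using congrArg Subtype.val (hz₀comm ⟨g, hg⟩)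
        have hpow_comm : ∀ g ∈ G, ∀ (i : ℕ) (x : Ω), g ((z ^ i) x) = (z ^ i) (g x) := by
          intro g hg i x
          have hcom : Commute (z ^ i) g := Commute.pow_left (hcomm g hg) i
          calc g ((z ^ i) x) = (g * z ^ i) x := rfl
            _ = (z ^ i * g) x := by rw [hcom.symm.eq]
            _ = (z ^ i) (g x) := rfl
        have hp0 : 0 < p := hp.pos
        set s : Setoid Ω := zSetoid z hp0 hzp with hsdef
        -- monotone preservation of the relation by 2-closure elements
        have hKmono : ∀ τ ∈ twoClosure G, ∀ x y, zRel z x y → zRel z (τ x) (τ y) := by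
          rintro τ hτ x y ⟨i, rfl⟩
          obtain ⟨g, hg, hgx, hgy⟩ := hτ x ((z ^ i) x)
          refine ⟨i, ?_⟩
          calc (z ^ i) (τ x) = (z ^ i) (g x) := by rw [hgx]
            _ = g ((z ^ i) x) := (hpow_comm g hg i x).symm
            _ = τ ((z ^ i) x) := hgy
        have hKiff : ∀ τ ∈ twoClosure G, ∀ x y, zRel z x y ↔ zRel z (τ x) (τ y) := by
          intro τ hτ x y
          refine ⟨hKmono τ hτ x y, fun h => ?_⟩
          have := hKmono τ⁻¹ ((twoClosure G).inv_mem hτ) _ _ h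
          simpa using this
        have hGiff : ∀ g ∈ G, ∀ x y, zRel z x y ↔ zRel z (g x) (g y) := by
          intro g hg x y
          constructor
          · rintro ⟨i, rfl⟩
            exact ⟨i, (hpow_comm g hg i x).symm⟩
          · rintro ⟨i, hi⟩
            refine ⟨i, ?_⟩
            apply g.injective
            rw [← hi, hpow_comm g hg i x]
        -- the induced permutation on the quotient
        set σ' : Equiv.Perm (Quotient s) := Quotient.congr σ (hKiff σ hσ) with hσ'def
        have hσ'mk : ∀ x : Ω, σ' (Quotient.mk s x) = Quotient.mk s (σ x) := fun x => rfl
        set G' : Subgroup (Equiv.Perm (Quotient s)) := quotGroup z hp0 hzp G with hG'def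
        have hG' : IsPGroup p G' := by
          rintro ⟨g', hg'⟩
          obtain ⟨g, hgG, hmk⟩ := hg'
          obtain ⟨k', hk'⟩ := hG ⟨g, hgG⟩
          refine ⟨k', ?_⟩
          have hgpk : g ^ p ^ k' = 1 := by simpa using congrArg Subtype.val hk'
          ext1
          rw [Subgroup.coe_pow, Subgroup.coe_one]
          ext a
          induction a using Quotient.ind with
          | _ x =>
            rw [quot_pow g' g hmk, hgpk]
            rfl
        have hσ'2 : σ' ∈ twoClosure G' := by
          intro a b
          induction a using Quotient.ind with
          | _ x =>
          induction b using Quotient.ind with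
          | _ y =>
            obtain ⟨g, hg, hgx, hgy⟩ := hσ x y
            refine ⟨Quotient.congr g (hGiff g hg), ⟨g, hg, fun t => rfl⟩, ?_, ?_⟩
            · show Quotient.mk s (g x) = Quotient.mk s (σ x)
              rw [hgx]
            · show Quotient.mk s (g y) = Quotient.mk s (σ y)
              rw [hgy]
        have hσ'q : σ' ^ q = 1 := by
          ext a
          induction a using Quotient.ind with
          | _ x =>
            rw [quot_pow σ' σ hσ'mk, hσq]
            rfl
        haveI instQ : Fintype (Quotient s) := Fintype.ofFinite _
        obtain ⟨x₀, hx₀⟩ : ∃ x₀ : Ω, z x₀ ≠ x₀ := by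
          by_contra hall
          push_neg at hall
          exact hzne (Equiv.ext hall)
        have hlt : Fintype.card (Quotient s) < Fintype.card Ω := by
          refine Fintype.card_lt_of_surjective_not_injective (Quotient.mk s)
            (fun a => Quotient.exists_rep a) (fun w => ?_)
          have : Quotient.mk s x₀ = Quotient.mk s (z x₀) :=
            Quotient.sound ⟨1, by rw [pow_one]⟩
          exact hx₀ ((w this).symm)
        have hσ'1 : σ' = 1 := ih (Quotient s) instQ (by omega) G' hG' σ' hσ'2 hσ'q
        have hclass : ∀ x : Ω, ∃ i : ℕ, (z ^ i) x = σ x := by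
          intro x
          have h1 : Quotient.mk s (σ x) = Quotient.mk s x := by
            rw [← hσ'mk x, hσ'1]
            rfl
          exact (zRel_equivalence z hp0 hzp).symm (Quotient.exact h1)
        -- now conclude pointwise
        ext x
        show σ x = x
        by_contra hx
        obtain ⟨i, hi⟩ := hclass x
        have hpowfix : ∀ w : Ω, z w = w → ∀ j : ℕ, (z ^ j) w = w := by
          intro w hw j
          induction j with
          | zero => rfl
          | succ j ihj => rw [pow_succ, Equiv.Perm.mul_apply, hw, ihj]
        by_cases hzx : z x = x
        · exact hx (by rw [← hi, hpowfix x hzx i])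
        · have hfix : ∀ j : ℕ, (z ^ j) x = x → p ∣ j := by
            intro j hj
            by_contra hpj
            rw [pow_eq_pow_mod j hzp] at hj
            set r := j % p with hrdef
            have hr0 : r ≠ 0 := by
              intro h
              exact hpj (Nat.dvd_of_mod_eq_zero h)
            have hrp : ¬ p ∣ r := by
              intro h
              have := Nat.le_of_dvd (Nat.pos_of_ne_zero hr0) h
              have := Nat.mod_lt j hp0
              omega
            have hco : Nat.Coprime r p := ((hp.coprime_iff_not_dvd).mpr hrp).symm
            obtain ⟨t, -, ht⟩ := Nat.exists_mul_mod_eq_one_of_coprime hco hp.one_lt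
            have hpow2 : ∀ t' : ℕ, ((z ^ r) ^ t') x = x := by
              intro t'
              induction t' with
              | zero => simp
              | succ t' iht => rw [pow_succ, Equiv.Perm.mul_apply, hj, iht]
            have hrt : (z ^ (r * t)) x = x := by rw [pow_mul]; exact hpow2 t
            rw [pow_eq_pow_mod (r * t) hzp, ht, pow_one] at hrt
            exact hzx hrt
          have hstep : ∀ k : ℕ, σ ((z ^ k) x) = (z ^ (k + i)) x := by
            intro k
            obtain ⟨g, hg, hgx, hgy⟩ := hσ x ((z ^ k) x)
            calc σ ((z ^ k) x) = g ((z ^ k) x) := hgy.symm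
              _ = (z ^ k) (g x) := hpow_comm g hg k x
              _ = (z ^ k) (σ x) := by rw [hgx]
              _ = (z ^ k) ((z ^ i) x) := by rw [hi]
              _ = (z ^ (k + i)) x := pow_apply_pow z k i x
          have hiter : ∀ t : ℕ, (σ ^ t) x = (z ^ (t * i)) x := by
            intro t
            induction t with
            | zero => simp
            | succ t iht =>
                rw [pow_succ', Equiv.Perm.mul_apply, iht, hstep, Nat.succ_mul]
          have hqi : (z ^ (q * i)) x = x := by
            rw [← hiter q, hσq]
            rfl
          have hpdvd := hfix (q * i) hqi
          rcases hp.dvd_mul.mp hpdvd with h | h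
          · exact hne ((Nat.prime_dvd_prime_iff_eq hp hq).mp h).symm
          · obtain ⟨d, rfl⟩ := h
            rw [pow_mul, hzp, one_pow] at hi
            exact hx (by rw [← hi]; rfl)


end WielandtAux

/-- the 2-closure of a p-group is a p-group. -/
theorem stmt1 {Ω : Type*} [Finite Ω] {p : ℕ} (hp : p.Prime)
    (G : Subgroup (Equiv.Perm Ω)) (hG : IsPGroup p G) :
    IsPGroup p (twoClosure G) := by
  haveI : Fintype Ω := Fintype.ofFinite Ω
  intro x
  have hN0 : orderOf x ≠ 0 := (orderOf_pos x).ne'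
  have hprimes : ∀ {d : ℕ}, d.Prime → d ∣ orderOf x → d = p := by
    intro r hr hrN
    by_contra hrp
    set y := x ^ (orderOf x / r) with hydef
    have hyord : orderOf y = r := orderOf_pow_orderOf_div hN0 hrN
    have hyq : (y : Equiv.Perm Ω) ^ r = 1 := by
      have : y ^ r = 1 := by rw [← hyord]; exact pow_orderOf_eq_one y
      simpa using congrArg Subtype.val this
    have hy1 : (y : Equiv.Perm Ω) = 1 :=
      WielandtAux.key hp hr hrp (Fintype.card Ω) Ω inferInstance le_rfl G hG
        (y : Equiv.Perm Ω) y.2 hyq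
    have hy1' : y = 1 := Subtype.ext (by rw [OneMemClass.coe_one]; exact hy1)
    rw [hy1', orderOf_one] at hyord
    exact hr.one_lt.ne' hyord.symm
  have hpow := Nat.eq_prime_pow_of_unique_prime_dvd hN0 hprimes
  exact ⟨(orderOf x).primeFactorsList.length, by rw [← hpow]; exact pow_orderOf_eq_one x⟩

end
end

section
/- Let H be a finite group and G ≤ Sym(H) a subgroup containing the group H_R of right translations. Then the rational span of the elements ∑_{h ∈ T} h for T ranging over the orbits of the point stabilizer G_1 on H is a subalgebra of the group algebra ℚH that is closed under the operations making it an S-ring (i.e., it contains the identity as a singleton class, its classes are closed under inversion, and it is closed under multiplication). -/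
open scoped Classical Pointwise

noncomputable section

variable {H : Type*}

section Stmt2Aux

variable {H : Type*} [Group H] [Fintype H] (G : Subgroup (Equiv.Perm H))

lemma mem_orbitOfStab_self (h : H) : h ∈ orbitOfStab G h :=
  ⟨1, G.one_mem, rfl, rfl⟩

lemma orbitOfStab_mem_iff {g : Equiv.Perm H} (hg : g ∈ G) (hg1 : g 1 = 1)
    (a x : H) : x ∈ orbitOfStab G a ↔ g x ∈ orbitOfStab G a := by
  constructor
  · rintro ⟨g', hg', hg'1, rfl⟩
    exact ⟨g * g', G.mul_mem hg hg', by simp [Equiv.Perm.mul_apply, hg'1, hg1], rfl⟩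
  · rintro ⟨g', hg', hg'1, hgx⟩
    refine ⟨g⁻¹ * g', G.mul_mem (G.inv_mem hg) hg', ?_, ?_⟩
    · simp only [Equiv.Perm.mul_apply, hg'1]
      exact g.injective (by simp [hg1])
    · simp only [Equiv.Perm.mul_apply, hgx]
      exact g.injective (by simp)

lemma orbitOfStab_symm {w z : H} (h : w ∈ orbitOfStab G z) : z ∈ orbitOfStab G w := by
  obtain ⟨g, hg, hg1, rfl⟩ := h
  refine ⟨g⁻¹, G.inv_mem hg, g.injective (by simp [hg1]), g.injective (by simp)⟩

lemma orbitOfStab_eq {w z : H} (h : w ∈ orbitOfStab G z) :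
    orbitOfStab G w = orbitOfStab G z := by
  obtain ⟨g0, hg0, hg01, rfl⟩ := h
  ext x
  constructor
  · rintro ⟨g, hg, hg1, rfl⟩
    exact ⟨g * g0, G.mul_mem hg hg0, by simp [Equiv.Perm.mul_apply, hg01, hg1], rfl⟩
  · rintro ⟨g, hg, hg1, rfl⟩
    refine ⟨g * g0⁻¹, G.mul_mem hg (G.inv_mem hg0), ?_, ?_⟩
    · simp only [Equiv.Perm.mul_apply]
      rw [show g0⁻¹ (1 : H) = 1 from g0.injective (by simp [hg01]), hg1]
    · simp [Equiv.Perm.mul_apply]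

lemma conjStab (hG : rightRegular H ≤ G) {g : Equiv.Perm H} (hg : g ∈ G)
    (hg1 : g 1 = 1) (b : H) :
    ∃ c : Equiv.Perm H, c ∈ G ∧ c 1 = 1 ∧ ∀ x, c x = g (x * b) * (g b)⁻¹ := by
  have hb : Equiv.mulRight b ∈ G := hG ⟨b, rfl⟩
  have hb' : (Equiv.mulRight (g b))⁻¹ ∈ G := G.inv_mem (hG ⟨g b, rfl⟩)
  refine ⟨(Equiv.mulRight (g b))⁻¹ * g * Equiv.mulRight b,
    G.mul_mem (G.mul_mem hb' hg) hb, ?_, fun x => ?_⟩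
  · simp [Equiv.Perm.mul_apply]
  · simp [Equiv.Perm.mul_apply]

lemma orbitOfStab_inv (hG : rightRegular H ≤ G) (h : H) :
    (orbitOfStab G h)⁻¹ = orbitOfStab G h⁻¹ := by
  have key : ∀ (h x : H), x⁻¹ ∈ orbitOfStab G h → x ∈ orbitOfStab G h⁻¹ := by
    rintro h x ⟨g, hg, hg1, hgh⟩
    obtain ⟨c, hc, hc1, hcx⟩ := conjStab G hG hg hg1 h
    refine ⟨c, hc, hc1, ?_⟩
    rw [hcx, inv_mul_cancel, hg1, one_mul, hgh, inv_inv]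
  ext x
  rw [Set.mem_inv]
  constructor
  · exact key h x
  · intro hx
    have := key h⁻¹ x⁻¹ (by rwa [inv_inv])
    rwa [inv_inv] at this

lemma simpleQ_apply (T : Set H) (z : H) :
    (simpleQ T).coeff z = if z ∈ T.toFinset then (1 : ℚ) else 0 := by
  classical
  rw [simpleQ]
  rw [show ((∑ h ∈ T.toFinset, MonoidAlgebra.single h (1 : ℚ)).coeff z)
      = ∑ h ∈ T.toFinset, (MonoidAlgebra.single h (1 : ℚ)).coeff z from by
    rw [MonoidAlgebra.coeff_sum]; exact Finset.sum_apply' z]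
  simp_rw [MonoidAlgebra.single_apply]
  exact Finset.sum_ite_eq' T.toFinset z (fun _ => (1 : ℚ))

lemma simpleQ_mul_apply (T S : Set H) (z : H) :
    (simpleQ T * simpleQ S).coeff z
      = ∑ y ∈ S.toFinset, (if z * y⁻¹ ∈ T.toFinset then (1 : ℚ) else 0) := by
  classical
  rw [simpleQ, simpleQ, Finset.sum_mul_sum]
  simp_rw [MonoidAlgebra.single_mul_single, one_mul]
  rw [show ((∑ x ∈ T.toFinset, ∑ y ∈ S.toFinset,
        MonoidAlgebra.single (x * y) (1 : ℚ)).coeff z)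
      = ∑ x ∈ T.toFinset, ∑ y ∈ S.toFinset,
        (MonoidAlgebra.single (x * y) (1 : ℚ)).coeff z from by
    rw [MonoidAlgebra.coeff_sum, Finset.sum_apply']
    exact Finset.sum_congr rfl fun _ _ => by
      rw [MonoidAlgebra.coeff_sum]; exact Finset.sum_apply' z]
  rw [Finset.sum_comm]
  refine Finset.sum_congr rfl fun y hy => ?_
  simp_rw [MonoidAlgebra.single_apply]
  have : ∀ x : H, (x * y = z) ↔ (x = z * y⁻¹) := fun x => by
    constructor
    · rintro rfl; rw [mul_inv_cancel_right]
    · rintro rfl; rw [inv_mul_cancel_right]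
  simp_rw [this]
  exact Finset.sum_ite_eq' T.toFinset (z * y⁻¹) (fun _ => (1 : ℚ))

lemma simpleQ_orbit_mul_invariant (hG : rightRegular H ≤ G) (a b : H)
    {g : Equiv.Perm H} (hg : g ∈ G) (hg1 : g 1 = 1) (z : H) :
    (simpleQ (orbitOfStab G a) * simpleQ (orbitOfStab G b)).coeff (g z)
      = (simpleQ (orbitOfStab G a) * simpleQ (orbitOfStab G b)).coeff z := by
  classical
  rw [simpleQ_mul_apply, simpleQ_mul_apply]
  have step1 : ∀ y ∈ (orbitOfStab G b).toFinset,
      (if z * y⁻¹ ∈ (orbitOfStab G a).toFinset then (1 : ℚ) else 0)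
        = (if g z * (g y)⁻¹ ∈ (orbitOfStab G a).toFinset then (1 : ℚ) else 0) := by
    intro y _
    obtain ⟨c, hc, hc1, hcx⟩ := conjStab G hG hg hg1 y
    have hcz : c (z * y⁻¹) = g z * (g y)⁻¹ := by
      rw [hcx, inv_mul_cancel_right]
    have := orbitOfStab_mem_iff G hc hc1 a (z * y⁻¹)
    rw [hcz] at this
    simp only [Set.mem_toFinset]
    rw [this]
  rw [Finset.sum_congr rfl step1]
  refine Finset.sum_nbij' (fun y => g⁻¹ y) (fun y => g y) ?_ ?_ ?_ ?_ ?_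
  · intro y hy
    simp only [Set.mem_toFinset] at hy ⊢
    have := orbitOfStab_mem_iff G hg hg1 b (g⁻¹ y)
    rw [show g (g⁻¹ y) = y from g.apply_symm_apply y] at this
    exact this.mpr hy
  · intro y hy
    simp only [Set.mem_toFinset] at hy ⊢
    exact (orbitOfStab_mem_iff G hg hg1 b y).mp hy
  · intro y _; exact g.apply_symm_apply y
  · intro y _; exact g.symm_apply_apply y
  · intro y _; rw [show g (g⁻¹ y) = y from g.apply_symm_apply y]

lemma invariant_mem_span (f : MonoidAlgebra ℚ H)
    (hf : ∀ g ∈ G, g 1 = 1 → ∀ z : H, f.coeff (g z) = f.coeff z) :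
    f ∈ Submodule.span ℚ
      (simpleQ '' {S : Set H | ∃ h : H, S = orbitOfStab G h}) := by
  classical
  have key : f = ∑ z : H,
      (f.coeff z / ((orbitOfStab G z).toFinset.card : ℚ)) • simpleQ (orbitOfStab G z) := by
    ext w
    rw [show ((∑ z : H, (f.coeff z / ((orbitOfStab G z).toFinset.card : ℚ)) •
          simpleQ (orbitOfStab G z)).coeff w)
        = ∑ z : H, ((f.coeff z / ((orbitOfStab G z).toFinset.card : ℚ)) •
          simpleQ (orbitOfStab G z)).coeff w from by
        rw [MonoidAlgebra.coeff_sum]; exact Finset.sum_apply' w]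
    have hsa : ∀ (c : ℚ) (q : MonoidAlgebra ℚ H) (w : H), (c • q).coeff w = c * q.coeff w :=
      fun _ _ _ => rfl
    simp_rw [hsa, simpleQ_apply]
    have term : ∀ z : H,
        (f.coeff z / ((orbitOfStab G z).toFinset.card : ℚ)) *
          (if w ∈ (orbitOfStab G z).toFinset then (1 : ℚ) else 0)
        = if z ∈ (orbitOfStab G w).toFinset
            then f.coeff w / ((orbitOfStab G w).toFinset.card : ℚ) else 0 := by
      intro z
      by_cases hwz : w ∈ orbitOfStab G z
      · have hzw : z ∈ orbitOfStab G w := orbitOfStab_symm G hwz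
        have horb : orbitOfStab G z = orbitOfStab G w := (orbitOfStab_eq G hwz).symm
        have hfz : f.coeff z = f.coeff w := by
          obtain ⟨g, hg, hg1, rfl⟩ := hzw
          exact hf g hg hg1 w
        rw [if_pos (Set.mem_toFinset.mpr hwz), if_pos (Set.mem_toFinset.mpr hzw),
          horb, hfz, mul_one]
      · have hzw : z ∉ orbitOfStab G w := fun h => hwz (orbitOfStab_symm G h)
        rw [if_neg (fun h => hwz (Set.mem_toFinset.mp h)),
          if_neg (fun h => hzw (Set.mem_toFinset.mp h)), mul_zero]
    rw [Finset.sum_congr rfl fun z _ => term z]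
    rw [Finset.sum_ite_mem, Finset.univ_inter, Finset.sum_const, nsmul_eq_mul]
    have hcard : ((orbitOfStab G w).toFinset.card : ℚ) ≠ 0 := by
      have : w ∈ (orbitOfStab G w).toFinset := by
        simp [Set.mem_toFinset, mem_orbitOfStab_self]
      exact_mod_cast Finset.card_ne_zero_of_mem this
    field_simp
  rw [key]
  exact Submodule.sum_mem _ fun z _ => Submodule.smul_mem _ _
    (Submodule.subset_span ⟨orbitOfStab G z, ⟨z, rfl⟩, rfl⟩)

end Stmt2Aux

/-- the transitivity module of `G₁` is an S-ring over `H`. -/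
theorem stmt2 {H : Type*} [Group H] [Fintype H]
    (G : Subgroup (Equiv.Perm H)) (hG : rightRegular H ≤ G) :
    ∃ A : SRing H, A.basicSets = {S : Set H | ∃ h : H, S = orbitOfStab G h} := by
  refine ⟨⟨{S : Set H | ∃ h : H, S = orbitOfStab G h}, ?_, ?_, ?_, ?_, ?_⟩, rfl⟩
  · intro h
    refine ⟨orbitOfStab G h, ⟨⟨h, rfl⟩, mem_orbitOfStab_self G h⟩, ?_⟩
    rintro S ⟨⟨h', rfl⟩, hh⟩
    exact (orbitOfStab_eq G hh).symm
  · rintro T ⟨h, rfl⟩; exact ⟨h, mem_orbitOfStab_self G h⟩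
  · refine ⟨1, ?_⟩
    ext x
    simp only [Set.mem_singleton_iff]
    constructor
    · rintro rfl; exact mem_orbitOfStab_self G 1
    · rintro ⟨g, hg, hg1, rfl⟩; exact hg1
  · rintro T ⟨h, rfl⟩
    exact ⟨h⁻¹, orbitOfStab_inv G hG h⟩
  · rintro T ⟨a, rfl⟩ S ⟨b, rfl⟩
    exact invariant_mem_span G _ fun g hg hg1 z =>
      simpleQ_orbit_mul_invariant G hG a b hg hg1 z

end
end

section
/- Let 𝒜 be a p-S-ring over a finite p-group H. Then the thin radical O(𝒜) is non-trivial, i.e., there exists a non-identity element g ∈ H such that {g} is a basic set of 𝒜. -/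
open scoped Classical Pointwise

noncomputable section

variable {H : Type*}

/-- the thin radical of a p-S-ring over a nontrivial p-group is
non-trivial. -/
theorem stmt7 {H : Type*} [Group H] [Fintype H] [Nontrivial H] {p : ℕ}
    (hp : p.Prime) (hpH : IsPGroup p H) (A : SRing H) (hA : A.IsPSRing p) :
    ∃ g : H, g ≠ 1 ∧ ({g} : Set H) ∈ A.basicSets := by
  by_contra hcon
  push_neg at hcon
  -- the function assigning to each h its basic set
  have hfin : A.basicSets.Finite := Set.toFinite _
  set Pp : Finset (Set H) := hfin.toFinset with hPp
  have hmemPp : ∀ T : Set H, T ∈ Pp ↔ T ∈ A.basicSets := fun T => hfin.mem_toFinset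
  classical
  let f : H → Set H := fun h => (A.exists_unique_mem h).choose
  have hf1 : ∀ h, f h ∈ A.basicSets ∧ h ∈ f h := fun h =>
    (A.exists_unique_mem h).choose_spec.1
  have hf2 : ∀ h (T : Set H), T ∈ A.basicSets → h ∈ T → f h = T := by
    intro h T hT hhT
    exact ((A.exists_unique_mem h).choose_spec.2 T ⟨hT, hhT⟩).symm
  -- partition count
  have hcount : Fintype.card H = ∑ T ∈ Pp, (Finset.univ.filter (fun h => f h = T)).card := by
    rw [← Finset.card_univ]
    exact Finset.card_eq_sum_card_fiberwise (fun h _ => (hmemPp _).2 (hf1 h).1)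
  have hfiber : ∀ T ∈ Pp, (Finset.univ.filter (fun h => f h = T)).card = T.toFinset.card := by
    intro T hT
    congr 1
    ext h
    simp only [Finset.mem_filter, Finset.mem_univ, true_and, Set.mem_toFinset]
    constructor
    · rintro rfl; exact (hf1 h).2
    · intro hh; exact hf2 h T ((hmemPp _).1 hT) hh
  have hcount2 : Fintype.card H = ∑ T ∈ Pp, T.toFinset.card := by
    rw [hcount]; exact Finset.sum_congr rfl hfiber
  -- p divides card of every basic set except {1}
  have hdvd : ∀ T ∈ Pp.erase ({1} : Set H), p ∣ T.toFinset.card := by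
    intro T hT
    obtain ⟨hne, hT'⟩ := Finset.mem_erase.mp hT
    obtain ⟨k, hk⟩ := hA T ((hmemPp _).1 hT')
    have hcardT : T.toFinset.card = p ^ k := by
      rw [← hk, Nat.card_eq_fintype_card, Set.toFinset_card]
    cases k with
    | zero =>
      exfalso
      have h1 : T.ncard = 1 := by
        rw [Set.ncard_eq_toFinset_card', hcardT, pow_zero]
      obtain ⟨g, rfl⟩ := Set.ncard_eq_one.mp h1
      rcases eq_or_ne g 1 with rfl | hg
      · exact hne rfl
      · exact hcon g hg ((hmemPp _).1 hT')
    | succ n =>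
      rw [hcardT]
      exact dvd_pow_self p (Nat.succ_ne_zero n)
  -- {1} ∈ Pp
  have hone : ({1} : Set H) ∈ Pp := (hmemPp _).2 A.one_mem
  have hsplit : Fintype.card H = 1 + ∑ T ∈ Pp.erase ({1} : Set H), T.toFinset.card := by
    rw [hcount2, ← Finset.add_sum_erase _ _ hone]
    congr 1
    simp
  have hpsum : p ∣ ∑ T ∈ Pp.erase ({1} : Set H), T.toFinset.card :=
    Finset.dvd_sum hdvd
  -- p divides card H
  haveI : Fact p.Prime := ⟨hp⟩
  obtain ⟨n, hn⟩ := IsPGroup.iff_card.mp hpH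
  rw [Nat.card_eq_fintype_card] at hn
  have hn1 : n ≠ 0 := by
    rintro rfl
    simp only [pow_zero] at hn
    exact (Fintype.one_lt_card).ne' hn
  have hpH' : p ∣ Fintype.card H := by
    rw [hn]; exact dvd_pow_self p hn1
  have : p ∣ 1 := by
    have := Nat.dvd_sub hpH' hpsum
    rwa [hsplit, Nat.add_sub_cancel] at this
  exact hp.one_lt.ne' (Nat.dvd_one.mp this)

end
end

section
/- Let 𝒜 be a Schurian S-ring over a finite group H. Then the thin radical satisfies O(𝒜) = {h ∈ H : the left translation h_L centralizes Aut(𝒜) in Sym(H)}. -/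
open scoped Classical Pointwise

noncomputable section

variable {H : Type*}

lemma mem_aut_iff' [Group H] [Fintype H] (A : SRing H) (g : Equiv.Perm H) :
    g ∈ A.aut ↔ ∀ T ∈ A.basicSets, g ∈ cayAut T := by
  simp [SRing.aut, Subgroup.mem_iInf]

lemma mem_orbit_iff' [Group H] {G : Subgroup (Equiv.Perm H)}
    (hG : rightRegular H ≤ G) (k x y : H) :
    y * x⁻¹ ∈ orbitOfStab G k ↔ ∃ σ ∈ G, σ 1 = x ∧ σ k = y := by
  constructor
  · rintro ⟨g, hg, hg1, hgk⟩
    refine ⟨Equiv.mulRight x * g, G.mul_mem (hG ⟨x, rfl⟩) hg, ?_, ?_⟩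
    · simp [Equiv.Perm.mul_apply, hg1]
    · simp [Equiv.Perm.mul_apply, hgk]
  · rintro ⟨σ, hσ, h1, hk⟩
    refine ⟨Equiv.mulRight x⁻¹ * σ, G.mul_mem (hG ⟨x⁻¹, rfl⟩) hσ, ?_, ?_⟩
    · simp [Equiv.Perm.mul_apply, h1]
    · simp [Equiv.Perm.mul_apply, hk]

/-- for a Schurian S-ring, the thin radical consists exactly of
those `h` whose left translation centralizes `Aut(𝒜)`. -/
theorem stmt13 {H : Type*} [Group H] [Fintype H] (A : SRing H)
    (hSch : A.IsSchurian) :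
    A.thin = {h : H | ∀ g ∈ A.aut, ∀ x : H, g (h⁻¹ * x) = h⁻¹ * g x} := by
  obtain ⟨G, hG, hbs⟩ := hSch
  have hGle : G ≤ A.aut := by
    intro g hg
    rw [mem_aut_iff']
    intro T hT
    rw [hbs] at hT
    obtain ⟨k, rfl⟩ := hT
    intro x y
    rw [mem_orbit_iff' hG, mem_orbit_iff' hG]
    constructor
    · rintro ⟨σ, hσ, h1, hk⟩
      exact ⟨g * σ, G.mul_mem hg hσ, by simp [Equiv.Perm.mul_apply, h1],
        by simp [Equiv.Perm.mul_apply, hk]⟩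
    · rintro ⟨τ, hτ, h1, hk⟩
      refine ⟨g⁻¹ * τ, G.mul_mem (G.inv_mem hg) hτ, ?_, ?_⟩
      · simp [Equiv.Perm.mul_apply, h1]
      · simp [Equiv.Perm.mul_apply, hk]
  ext h
  simp only [Set.mem_setOf_eq]
  constructor
  · intro hh g hg x
    have hc : g ∈ cayAut ({h} : Set H) := (mem_aut_iff' A g).1 hg _ hh
    have h1 : x * (h⁻¹ * x)⁻¹ ∈ ({h} : Set H) := by
      simp [mul_assoc]
    have h2 : g x * (g (h⁻¹ * x))⁻¹ ∈ ({h} : Set H) := (hc (h⁻¹ * x) x).1 h1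
    have h3 : g x * (g (h⁻¹ * x))⁻¹ = h := h2
    rw [eq_inv_mul_iff_mul_eq]
    exact (mul_inv_eq_iff_eq_mul.mp h3).symm
  · intro hcomm
    have horb : orbitOfStab G h = {h} := by
      ext x
      constructor
      · rintro ⟨g, hg, hg1, hgh⟩
        have e := hcomm g (hGle hg) h
        rw [inv_mul_cancel, hg1, hgh] at e
        have : x = h := by
          rw [eq_comm, ← mul_left_cancel_iff (a := h⁻¹), inv_mul_cancel, e]
        exact this
      · rintro rfl
        exact ⟨1, G.one_mem, rfl, rfl⟩
    show ({h} : Set H) ∈ A.basicSets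
    rw [hbs]
    exact ⟨h, horb.symm⟩

end
end
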